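/- Define c_n = (2/(n+2))·binom(n, n/2) if n is even and c_n = 0 if n is odd (so c_{2m} is the m-th Catalan number). Then for all n ≥ 0, ∑_{r=0}^{n} binom(n, r) · c_r · c_{n−r} = c_n · c_{n+2}. -/

import Mathlib

/-- The Catalan sequence interleaved with zeros: `c n = (2/(n+2)) * binom(n, n/2)`
for `n` even and `c n = 0` for `n` odd. -/
noncomputable def cSeq (n : ℕ) : ℚ :=
  if Even n then (2 / ((n : ℚ) + 2)) * (n.choose (n / 2) : ℚ) else 0

noncomputable def uu (k : ℕ) : ℚ := 1 / (k.factorial * (k + 1).factorial)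

lemma uu_ne (k : ℕ) : uu k ≠ 0 := by
  have h1 : (k.factorial : ℚ) ≠ 0 := Nat.cast_ne_zero.mpr k.factorial_ne_zero
  have h2 : ((k + 1).factorial : ℚ) ≠ 0 := Nat.cast_ne_zero.mpr (k + 1).factorial_ne_zero
  simp [uu, h1, h2]

lemma uu_succ (k : ℕ) : uu (k + 1) = uu k / (((k : ℚ) + 1) * ((k : ℚ) + 2)) := by
  have h1 : (k.factorial : ℚ) ≠ 0 := Nat.cast_ne_zero.mpr k.factorial_ne_zero
  have h2 : ((k + 1).factorial : ℚ) ≠ 0 := Nat.cast_ne_zero.mpr (k + 1).factorial_ne_zero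
  have e1 : ((k + 1).factorial : ℚ) = ((k : ℚ) + 1) * k.factorial := by
    rw [Nat.factorial_succ]; push_cast; ring
  have e2 : ((k + 2).factorial : ℚ) = ((k : ℚ) + 2) * (k + 1).factorial := by
    rw [show k + 2 = (k + 1) + 1 from rfl, Nat.factorial_succ]; push_cast; ring
  have hk1 : ((k : ℚ) + 1) ≠ 0 := by positivity
  have hk2 : ((k : ℚ) + 2) ≠ 0 := by positivity
  rw [uu, uu, e1, e2]
  field_simp
  rw [e1]

noncomputable def TT (m : ℕ) : ℚ := ∑ k ∈ Finset.range (m + 1), uu k * uu (m - k)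

/-- certificate polynomial -/
noncomputable def rr (m : ℚ) (k : ℚ) : ℚ := k * (k + 1) * (2 * k - 3 * m - 5)

lemma term_id (k j : ℕ) :
    ((k : ℚ) + j + 1) * ((k : ℚ) + j + 2) * ((k : ℚ) + j + 3) * (uu k * uu (j + 1))
      - 2 * (2 * ((k : ℚ) + j) + 3) * (uu k * uu j)
    = rr ((k : ℚ) + j) ((k : ℚ) + 1) * (uu (k + 1) * uu j)
      - rr ((k : ℚ) + j) (k : ℚ) * (uu k * uu (j + 1)) := by
  rw [uu_succ k, uu_succ j, rr, rr]
  have hk1 : ((k : ℚ) + 1) ≠ 0 := by positivity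
  have hk2 : ((k : ℚ) + 2) ≠ 0 := by positivity
  have hj1 : ((j : ℚ) + 1) ≠ 0 := by positivity
  have hj2 : ((j : ℚ) + 2) ≠ 0 := by positivity
  field_simp
  ring

lemma TT_rec (m : ℕ) :
    ((m : ℚ) + 1) * ((m : ℚ) + 2) * ((m : ℚ) + 3) * TT (m + 1)
      = 2 * (2 * (m : ℚ) + 3) * TT m := by
  set A : ℚ := ((m : ℚ) + 1) * ((m : ℚ) + 2) * ((m : ℚ) + 3) with hA
  set B : ℚ := 2 * (2 * (m : ℚ) + 3) with hB
  set g : ℕ → ℚ := fun k => rr (m : ℚ) (k : ℚ) * (uu k * uu (m + 1 - k)) with hg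
  have hterm : ∀ k ∈ Finset.range (m + 1),
      A * (uu k * uu (m + 1 - k)) - B * (uu k * uu (m - k)) = g (k + 1) - g k := by
    intro k hk
    rw [Finset.mem_range] at hk
    have hk' : k ≤ m := by omega
    set j := m - k with hj
    have hkj : k + j = m := by omega
    have h1 : m + 1 - k = j + 1 := by omega
    have h2 : m + 1 - (k + 1) = j := by omega
    have hc : (m : ℚ) = (k : ℚ) + (j : ℚ) := by
      rw [← hkj]; push_cast; ring
    rw [hg]
    simp only [h1, h2]
    rw [hA, hB, hc]
    push_cast
    have := term_id k j
    linarith [this]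
  have tel : ∑ k ∈ Finset.range (m + 1), (g (k + 1) - g k) = g (m + 1) - g 0 :=
    Finset.sum_range_sub g (m + 1)
  have hg0 : g 0 = 0 := by simp [hg, rr]
  have hgm : g (m + 1) = -A * (uu (m + 1) * uu 0) := by
    rw [hg]
    simp only [Nat.add_sub_cancel_left, Nat.sub_self]
    have : rr (m : ℚ) ((m : ℚ) + 1) = -A := by rw [rr, hA]; ring
    push_cast
    rw [this]
  have hsplit : TT (m + 1)
      = (∑ k ∈ Finset.range (m + 1), uu k * uu (m + 1 - k)) + uu (m + 1) * uu 0 := by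
    rw [TT, Finset.sum_range_succ, Nat.sub_self]
  have hsum : ∑ k ∈ Finset.range (m + 1),
      (A * (uu k * uu (m + 1 - k)) - B * (uu k * uu (m - k)))
        = -A * (uu (m + 1) * uu 0) := by
    rw [Finset.sum_congr rfl hterm, tel, hg0, hgm]; ring
  rw [Finset.sum_sub_distrib, ← Finset.mul_sum, ← Finset.mul_sum] at hsum
  have hTm : TT m = ∑ k ∈ Finset.range (m + 1), uu k * uu (m - k) := by rw [TT]
  rw [hsplit, hTm]
  linear_combination hsum

lemma fact_ne (k : ℕ) : (k.factorial : ℚ) ≠ 0 := Nat.cast_ne_zero.mpr k.factorial_ne_zero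

lemma TT_eq (m : ℕ) : TT m = ((2 * m + 2).factorial : ℚ)
    / (m.factorial * (m + 1).factorial * (m + 1).factorial * (m + 2).factorial) := by
  induction m with
  | zero => simp [TT, uu]
  | succ m ih =>
    have hA : ((m : ℚ) + 1) * ((m : ℚ) + 2) * ((m : ℚ) + 3) ≠ 0 := by positivity
    have hrec := TT_rec m
    rw [ih] at hrec
    have e1 : ((2 * (m + 1) + 2).factorial : ℚ)
        = (2 * (m : ℚ) + 4) * (2 * (m : ℚ) + 3) * (2 * m + 2).factorial := by
      rw [show 2 * (m + 1) + 2 = (2 * m + 3) + 1 from by ring, Nat.factorial_succ,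
        show 2 * m + 3 = (2 * m + 2) + 1 from rfl, Nat.factorial_succ]
      push_cast; ring
    have e2 : ((m + 1 + 1).factorial : ℚ) = ((m : ℚ) + 2) * (m + 1).factorial := by
      rw [Nat.factorial_succ]; push_cast; ring
    have e3 : ((m + 1 + 2).factorial : ℚ) = ((m : ℚ) + 3) * ((m : ℚ) + 2) * (m + 1).factorial := by
      rw [show m + 1 + 2 = (m + 2) + 1 from rfl, Nat.factorial_succ,
        show m + 2 = (m + 1) + 1 from rfl, Nat.factorial_succ]
      push_cast; ring
    have e4 : ((m + 1).factorial : ℚ) = ((m : ℚ) + 1) * m.factorial := by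
      rw [Nat.factorial_succ]; push_cast; ring
    have hTT : TT (m + 1)
        = 2 * (2 * (m : ℚ) + 3) * (((2 * m + 2).factorial : ℚ)
          / (m.factorial * (m + 1).factorial * (m + 1).factorial * (m + 2).factorial))
          / (((m : ℚ) + 1) * ((m : ℚ) + 2) * ((m : ℚ) + 3)) := by
      field_simp at hrec ⊢
      linarith [hrec]
    rw [hTT, e1, e2, e3]
    have h1 := fact_ne m
    have h2 := fact_ne (m + 1)
    have h3 := fact_ne (m + 2)
    have h4 := fact_ne (2 * m + 2)
    have hx1 : ((m : ℚ) + 1) ≠ 0 := by positivity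
    have hx2 : ((m : ℚ) + 2) ≠ 0 := by positivity
    have hx3 : ((m : ℚ) + 3) ≠ 0 := by positivity
    have e5 : ((m + 2).factorial : ℚ) = ((m : ℚ) + 2) * ((m : ℚ) + 1) * m.factorial := by
      rw [show m + 2 = (m + 1) + 1 from rfl, Nat.factorial_succ]
      push_cast
      rw [e4]; ring
    rw [e4]
    field_simp
    ring

lemma cSeq_even (k : ℕ) : cSeq (2 * k)
    = ((2 * k).factorial : ℚ) / (k.factorial * (k + 1).factorial) := by
  rw [cSeq, if_pos (even_two_mul k)]
  have h2 : 2 * k / 2 = k := by omega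
  rw [h2, Nat.cast_choose ℚ (by omega : k ≤ 2 * k), show 2 * k - k = k from by omega]
  have e4 : ((k + 1).factorial : ℚ) = ((k : ℚ) + 1) * k.factorial := by
    rw [Nat.factorial_succ]; push_cast; ring
  have h1 := fact_ne k
  have hx1 : ((k : ℚ) + 1) ≠ 0 := by positivity
  rw [e4]
  push_cast
  field_simp

lemma cSeq_odd {n : ℕ} (h : ¬ Even n) : cSeq n = 0 := by rw [cSeq, if_neg h]

lemma term_red (k j : ℕ) :
    (((2 * (k + j)).choose (2 * k) : ℕ) : ℚ) * cSeq (2 * k) * cSeq (2 * j)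
      = ((2 * (k + j)).factorial : ℚ) * (uu k * uu j) := by
  rw [cSeq_even, cSeq_even, Nat.cast_choose ℚ (by omega : 2 * k ≤ 2 * (k + j)),
    show 2 * (k + j) - 2 * k = 2 * j from by omega, uu, uu]
  have := fact_ne k; have := fact_ne (k + 1); have := fact_ne j; have := fact_ne (j + 1)
  have := fact_ne (2 * k); have := fact_ne (2 * j)
  field_simp

/-- Binomial convolution identity `∑_{r=0}^n binom(n,r) c_r c_{n-r} = c_n c_{n+2}`. -/
theorem binomial_convolution_cSeq (n : ℕ) :
    ∑ r ∈ Finset.range (n + 1), (n.choose r : ℚ) * cSeq r * cSeq (n - r) =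
      cSeq n * cSeq (n + 2) := by
  rcases Nat.even_or_odd n with he | ho
  · obtain ⟨m, rfl⟩ := he
    rw [show m + m = 2 * m from (two_mul m).symm]
    rw [← Finset.sum_filter_add_sum_filter_not (Finset.range (2 * m + 1)) (fun r => Even r)]
    have hodd0 : ∑ r ∈ Finset.filter (fun r => ¬ Even r) (Finset.range (2 * m + 1)),
        ((2 * m).choose r : ℚ) * cSeq r * cSeq (2 * m - r) = 0 := by
      apply Finset.sum_eq_zero
      intro r hr
      rw [Finset.mem_filter] at hr
      rw [cSeq_odd hr.2]
      ring
    have himg : Finset.filter (fun r => Even r) (Finset.range (2 * m + 1))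
        = Finset.image (fun k => 2 * k) (Finset.range (m + 1)) := by
      ext x
      simp only [Finset.mem_filter, Finset.mem_image, Finset.mem_range, Nat.even_iff]
      constructor
      · rintro ⟨h1, h2⟩
        exact ⟨x / 2, by omega, by omega⟩
      · rintro ⟨k, hk, rfl⟩
        exact ⟨by omega, by omega⟩
    rw [hodd0, add_zero, himg,
      Finset.sum_image (fun a _ b _ h => by omega : ∀ a ∈ Finset.range (m + 1),
        ∀ b ∈ Finset.range (m + 1), 2 * a = 2 * b → a = b)]
    have hterm : ∀ k ∈ Finset.range (m + 1),
        ((2 * m).choose (2 * k) : ℚ) * cSeq (2 * k) * cSeq (2 * m - 2 * k)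
          = ((2 * m).factorial : ℚ) * (uu k * uu (m - k)) := by
      intro k hk
      rw [Finset.mem_range] at hk
      have hk' : k ≤ m := by omega
      have h1 : 2 * m - 2 * k = 2 * (m - k) := by omega
      have h2 : 2 * m = 2 * (k + (m - k)) := by omega
      rw [h1, h2, term_red k (m - k)]
    rw [Finset.sum_congr rfl hterm, ← Finset.mul_sum, ← TT]
    rw [cSeq_even m, show 2 * m + 2 = 2 * (m + 1) from by ring, cSeq_even (m + 1),
      TT_eq m, show 2 * (m + 1) = 2 * m + 2 from by ring]
    have h1 := fact_ne m
    have h2 := fact_ne (m + 1)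
    have h3 := fact_ne (m + 2)
    have h4 := fact_ne (2 * m + 2)
    field_simp
  · have hne : ¬ Even n := Nat.not_even_iff_odd.mpr ho
    rw [cSeq_odd hne, zero_mul]
    apply Finset.sum_eq_zero
    intro r hr
    rw [Finset.mem_range] at hr
    rcases Nat.even_or_odd r with her | hor
    · have hnr : ¬ Even (n - r) := by
        rw [Nat.even_iff] at her ⊢
        rw [Nat.even_iff] at hne
        omega
      rw [cSeq_odd hnr]
      ring
    · rw [cSeq_odd (Nat.not_even_iff_odd.mpr hor)]
      ring
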